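/- Let G be an abelian group and A, B finite nonempty subsets with |A| ≥ |B| ≥ 2. Suppose E(A, B) is large enough that applying the Shkredov–Yekhanin theorem is possible: assume that for any nonempty B₀ ⊆ B with E(A, B₀) ≥ |A||B₀|²/M there exists nonempty G₀ ⊆ B₀ with dim(G₀) ≤ C·M·log|A| and E(A, G₀) ≥ 2⁻⁵ E(A, B₀). Let K := |A||B|²/E(A, B), and let M ≥ K. Then there is a partition B = B' ⊔ B'' such that dim(B') = O(M log|A| · log(|B|M/K)), E(A, B') = Ω(E(A, B)), and E(A, B'') ≤ |A||B''|²/M. -/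

import Mathlib

open Finset

/-- The additive energy `E(X, Y)`. -/
def energy {G : Type*} [AddCommGroup G] [DecidableEq G] (X Y : Finset G) : ℕ :=
  (((X ×ˢ X) ×ˢ Y ×ˢ Y).filter fun q => q.1.1 + q.2.1 = q.1.2 + q.2.2).card

/-- A finset `S` is dissociated if the only `{-1,0,1}`-combination of its
elements summing to zero is the trivial one. -/
def Dissociated {G : Type*} [AddCommGroup G] (S : Finset G) : Prop :=
  ∀ ε : G → ℤ, (∀ s ∈ S, ε s = -1 ∨ ε s = 0 ∨ ε s = 1) →
    ∑ s ∈ S, ε s • s = 0 → ∀ s ∈ S, ε s = 0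

/-- The additive dimension of `A` : the size of a largest dissociated subset of `A`. -/
noncomputable def addDim {G : Type*} [AddCommGroup G] (A : Finset G) : ℕ :=
  sSup {d : ℕ | ∃ S : Finset G, S ⊆ A ∧ Dissociated S ∧ S.card = d}

/-- `Span(S) = { ∑_{s ∈ S} ε_s s : ε_s ∈ {0, -1, 1} }`. -/
def spn {G : Type*} [AddCommGroup G] (S : Finset G) : Set G :=
  {x | ∃ ε : G → ℤ, (∀ s ∈ S, ε s = -1 ∨ ε s = 0 ∨ ε s = 1) ∧ x = ∑ s ∈ S, ε s • s}

lemma dissociated_empty {G : Type*} [AddCommGroup G] : Dissociated (∅ : Finset G) := by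
  intro ε _ _ s hs; simp at hs

lemma dissociated_mono {G : Type*} [AddCommGroup G] {S T : Finset G}
    (h : S ⊆ T) (hT : Dissociated T) : Dissociated S := by
  classical
  intro ε hε hsum s hs
  set ε' : G → ℤ := fun x => if x ∈ S then ε x else 0 with hε'def
  have h0 : ∀ t ∈ T, ε' t = -1 ∨ ε' t = 0 ∨ ε' t = 1 := by
    intro t ht
    by_cases hts : t ∈ S
    · simpa [ε', hts] using hε t hts
    · simp [ε', hts]
  have hsum' : ∑ t ∈ T, ε' t • t = 0 := by
    rw [← Finset.sum_subset h (by intro x _ hxs; simp [ε', hxs])]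
    rw [← hsum]
    exact Finset.sum_congr rfl fun x hx => by simp [ε', hx]
  have := hT ε' h0 hsum' s (h hs)
  simpa [ε', hs] using this

lemma addDim_bddAbove {G : Type*} [AddCommGroup G] (A : Finset G) :
    BddAbove {d : ℕ | ∃ S : Finset G, S ⊆ A ∧ Dissociated S ∧ S.card = d} := by
  refine ⟨A.card, ?_⟩
  rintro d ⟨S, hS, -, rfl⟩
  exact Finset.card_le_card hS

lemma le_addDim {G : Type*} [AddCommGroup G] {A S : Finset G} (hS : S ⊆ A)
    (hd : Dissociated S) : S.card ≤ addDim A :=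
  le_csSup (addDim_bddAbove A) ⟨S, hS, hd, rfl⟩

lemma addDim_le {G : Type*} [AddCommGroup G] {A : Finset G} {n : ℕ}
    (h : ∀ S : Finset G, S ⊆ A → Dissociated S → S.card ≤ n) : addDim A ≤ n := by
  apply csSup_le' ?_
  rintro d ⟨S, hS, hd, rfl⟩
  exact h S hS hd

lemma addDim_empty {G : Type*} [AddCommGroup G] : addDim (∅ : Finset G) = 0 :=
  Nat.le_zero.1 (addDim_le fun S hS _ => by simp [Finset.subset_empty.1 hS])

lemma addDim_union_le {G : Type*} [AddCommGroup G] [DecidableEq G] (X Y : Finset G) :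
    addDim (X ∪ Y) ≤ addDim X + addDim Y := by
  apply addDim_le
  intro S hS hd
  have h1 : (S ∩ X).card ≤ addDim X :=
    le_addDim Finset.inter_subset_right (dissociated_mono Finset.inter_subset_left hd)
  have h2 : (S \ X).card ≤ addDim Y := by
    refine le_addDim ?_ (dissociated_mono Finset.sdiff_subset hd)
    intro s hs
    rcases Finset.mem_sdiff.1 hs with ⟨hs1, hs2⟩
    rcases Finset.mem_union.1 (hS hs1) with h | h
    · exact absurd h hs2
    · exact h
  calc S.card = (S ∩ X).card + (S \ X).card := (Finset.card_inter_add_card_sdiff S X).symm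
    _ ≤ _ := Nat.add_le_add h1 h2

lemma energy_mono {G : Type*} [AddCommGroup G] [DecidableEq G] (A : Finset G) {X Y : Finset G}
    (h : X ⊆ Y) : energy A X ≤ energy A Y := by
  apply Finset.card_le_card
  intro q hq
  simp only [Finset.mem_filter, Finset.mem_product] at hq ⊢
  exact ⟨⟨hq.1.1, h hq.1.2.1, h hq.1.2.2⟩, hq.2⟩

lemma energy_empty {G : Type*} [AddCommGroup G] [DecidableEq G] (A : Finset G) :
    energy A ∅ = 0 := by simp [energy]

lemma energy_pos {G : Type*} [AddCommGroup G] [DecidableEq G] {A X : Finset G}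
    (hA : A.Nonempty) (hX : X.Nonempty) : 0 < energy A X := by
  obtain ⟨a, ha⟩ := hA
  obtain ⟨b, hb⟩ := hX
  apply Finset.card_pos.2
  exact ⟨((a, a), (b, b)), by simp [Finset.mem_filter, Finset.mem_product, ha, hb]⟩

lemma energy_le {G : Type*} [AddCommGroup G] [DecidableEq G] (A X : Finset G) :
    energy A X ≤ A.card * X.card ^ 2 := by
  classical
  have h : energy A X ≤ ((A ×ˢ X) ×ˢ X).card := by
    apply Finset.card_le_card_of_injOn (fun q => ((q.1.1, q.2.1), q.2.2))
    · intro q hq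
      simp only [Finset.mem_coe, Finset.mem_filter, Finset.mem_product] at hq ⊢
      exact ⟨⟨hq.1.1.1, hq.1.2.1⟩, hq.1.2.2⟩
    · rintro ⟨⟨a1, a2⟩, b1, b2⟩ hq ⟨⟨a1', a2'⟩, b1', b2'⟩ hq' he
      simp only [Finset.coe_filter, Set.mem_setOf_eq, Finset.mem_product] at hq hq'
      simp only [Prod.mk.injEq] at he ⊢
      obtain ⟨⟨rfl, rfl⟩, rfl⟩ := he
      refine ⟨⟨rfl, ?_⟩, rfl, rfl⟩
      have e1 := hq.2
      have e2 := hq'.2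
      exact add_right_cancel (e1.symm.trans e2)
  calc energy A X ≤ ((A ×ˢ X) ×ˢ X).card := h
    _ = A.card * X.card ^ 2 := by simp [Finset.card_product]; ring

lemma energy_union_ge {G : Type*} [AddCommGroup G] [DecidableEq G] (A : Finset G)
    {X Y : Finset G} (hXY : Disjoint X Y) :
    energy A X + energy A Y ≤ energy A (X ∪ Y) := by
  classical
  unfold energy
  have hdisj : Disjoint
      (((A ×ˢ A) ×ˢ X ×ˢ X).filter fun q => q.1.1 + q.2.1 = q.1.2 + q.2.2)
      (((A ×ˢ A) ×ˢ Y ×ˢ Y).filter fun q => q.1.1 + q.2.1 = q.1.2 + q.2.2) := by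
    rw [Finset.disjoint_left]
    intro q hq hq'
    simp only [Finset.mem_filter, Finset.mem_product] at hq hq'
    exact Finset.disjoint_left.1 hXY hq.1.2.1 hq'.1.2.1
  rw [← Finset.card_union_of_disjoint hdisj]
  apply Finset.card_le_card
  intro q hq
  simp only [Finset.mem_union, Finset.mem_filter, Finset.mem_product] at hq ⊢
  rcases hq with h | h
  · exact ⟨⟨h.1.1, Or.inl h.1.2.1, Or.inl h.1.2.2⟩, h.2⟩
  · exact ⟨⟨h.1.1, Or.inr h.1.2.1, Or.inr h.1.2.2⟩, h.2⟩

lemma aux_induction {G : Type} [AddCommGroup G] [DecidableEq G] (A B : Finset G) (M D : ℝ)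
    (hM : 0 < M) (hD : 0 ≤ D)
    (hyp : ∀ B₀ : Finset G, B₀ ⊆ B → B₀.Nonempty →
      (A.card : ℝ) * (B₀.card : ℝ) ^ 2 / M ≤ (energy A B₀ : ℝ) →
      ∃ G₀ : Finset G, G₀ ⊆ B₀ ∧ G₀.Nonempty ∧
        (addDim G₀ : ℝ) ≤ D ∧ (2 : ℝ)⁻¹ ^ 5 * (energy A B₀ : ℝ) ≤ (energy A G₀ : ℝ)) :
    ∀ n : ℕ, ∀ B₀ : Finset G, B₀.card ≤ n → B₀ ⊆ B →
      ∃ B' B'' : Finset G, ∃ k : ℕ, Disjoint B' B'' ∧ B' ∪ B'' = B₀ ∧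
        (addDim B' : ℝ) ≤ k * D ∧
        (energy A B'' : ℝ) ≤ (A.card : ℝ) * (B''.card : ℝ) ^ 2 / M ∧
        (1 ≤ k → (2 : ℝ)⁻¹ ^ 5 * (energy A B₀ : ℝ) ≤ (energy A B' : ℝ) ∧
          ((32 : ℝ) / 31) ^ (k - 1) * ((A.card : ℝ) / M) ≤ (energy A B₀ : ℝ)) := by
  intro n
  induction n with
  | zero =>
    intro B₀ hcard _
    have hB₀ : B₀ = ∅ := Finset.card_eq_zero.1 (Nat.le_zero.1 hcard)
    subst hB₀
    refine ⟨∅, ∅, 0, Finset.disjoint_empty_left _, by simp, ?_, ?_, by omega⟩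
    · simp [addDim_empty]
    · simp [energy_empty]
  | succ n ih =>
    intro B₀ hcard hB₀B
    by_cases hcase : B₀.Nonempty ∧ (A.card : ℝ) * (B₀.card : ℝ) ^ 2 / M ≤ (energy A B₀ : ℝ)
    · obtain ⟨hne, hthr⟩ := hcase
      obtain ⟨G₀, hG₀B₀, hG₀ne, hG₀dim, hG₀E⟩ := hyp B₀ hB₀B hne hthr
      have hB₁ssub : B₀ \ G₀ ⊂ B₀ := by
        obtain ⟨g, hg⟩ := hG₀ne
        refine Finset.ssubset_iff_of_subset Finset.sdiff_subset |>.2 ⟨g, hG₀B₀ hg, by simp [hg]⟩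
      have hB₁card : (B₀ \ G₀).card ≤ n := by
        have := Finset.card_lt_card hB₁ssub
        omega
      obtain ⟨B', B'', k₁, hdisj, hunion, hdim, hEsmall, hclause⟩ :=
        ih (B₀ \ G₀) hB₁card (Finset.sdiff_subset.trans hB₀B)
      have hGdisj : Disjoint G₀ (B₀ \ G₀) := Finset.disjoint_sdiff
      have hGunion : G₀ ∪ (B₀ \ G₀) = B₀ := Finset.union_sdiff_of_subset hG₀B₀
      have hEsum : (energy A G₀ : ℝ) + (energy A (B₀ \ G₀) : ℝ) ≤ (energy A B₀ : ℝ) := by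
        have := energy_union_ge A hGdisj
        rw [hGunion] at this
        exact_mod_cast this
      refine ⟨G₀ ∪ B', B'', k₁ + 1, ?_, ?_, ?_, hEsmall, ?_⟩
      · refine Finset.disjoint_union_left.2 ⟨?_, hdisj⟩
        have hB''sub : B'' ⊆ B₀ \ G₀ := hunion ▸ Finset.subset_union_right
        exact (Finset.disjoint_sdiff.mono_right hB''sub)
      · rw [Finset.union_assoc, hunion, hGunion]
      · have h1 : (addDim (G₀ ∪ B') : ℝ) ≤ (addDim G₀ : ℝ) + (addDim B' : ℝ) := by
          exact_mod_cast addDim_union_le G₀ B'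
        push_cast
        linarith
      · intro _
        constructor
        · have := energy_mono A (Finset.subset_union_left (s₁ := G₀) (s₂ := B'))
          have h2 : (energy A G₀ : ℝ) ≤ (energy A (G₀ ∪ B') : ℝ) := by exact_mod_cast this
          linarith
        · simp only [Nat.add_sub_cancel]
          rcases Nat.eq_zero_or_pos k₁ with hk₁ | hk₁
          · subst hk₁
            simp only [pow_zero, one_mul]
            have hB₀1 : (1 : ℝ) ≤ (B₀.card : ℝ) := by
              exact_mod_cast Finset.card_pos.2 hne
            have hA0 : (0 : ℝ) ≤ (A.card : ℝ) := Nat.cast_nonneg _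
            have hb2 : (1 : ℝ) ≤ (B₀.card : ℝ) ^ 2 := by nlinarith
            have : (A.card : ℝ) / M ≤ (A.card : ℝ) * (B₀.card : ℝ) ^ 2 / M := by
              gcongr
              nlinarith
            linarith
          · obtain ⟨hElow, hpow⟩ := hclause hk₁
            obtain ⟨m, rfl⟩ : ∃ m, k₁ = m + 1 := ⟨k₁ - 1, by omega⟩
            simp only [Nat.add_sub_cancel] at hpow
            have hE1le : (energy A (B₀ \ G₀) : ℝ) ≤ (31 / 32 : ℝ) * (energy A B₀ : ℝ) := by
              have : (2 : ℝ)⁻¹ ^ 5 * (energy A B₀ : ℝ) ≤ (energy A G₀ : ℝ) := hG₀E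
              nlinarith
            rw [pow_succ]
            have hAM : (0 : ℝ) ≤ (A.card : ℝ) / M := by positivity
            calc ((32 : ℝ) / 31) ^ m * (32 / 31) * ((A.card : ℝ) / M)
                = (32 / 31) * (((32 : ℝ) / 31) ^ m * ((A.card : ℝ) / M)) := by ring
              _ ≤ (32 / 31) * (energy A (B₀ \ G₀) : ℝ) := by gcongr
              _ ≤ (32 / 31) * ((31 / 32 : ℝ) * (energy A B₀ : ℝ)) := by gcongr
              _ = (energy A B₀ : ℝ) := by ring
    · refine ⟨∅, B₀, 0, Finset.disjoint_empty_left _, by simp, by simp [addDim_empty], ?_, by omega⟩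
      rcases B₀.eq_empty_or_nonempty with rfl | hne
      · simp [energy_empty]
      · push_neg at hcase
        exact le_of_lt (hcase hne)


set_option maxHeartbeats 1000000 in
/-- Corollary 5: energy decomposition into a structured part and a part of small energy. -/
theorem energy_decomposition :
    ∀ C : ℝ, 0 < C → ∃ c₁ c₂ : ℝ, 0 < c₁ ∧ 0 < c₂ ∧
      ∀ (G : Type) [AddCommGroup G] [DecidableEq G] (A B : Finset G) (M K : ℝ),
        2 ≤ B.card → B.card ≤ A.card →
        K = (A.card : ℝ) * (B.card : ℝ) ^ 2 / (energy A B : ℝ) →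
        K ≤ M →
        (∀ B₀ : Finset G, B₀ ⊆ B → B₀.Nonempty →
          (A.card : ℝ) * (B₀.card : ℝ) ^ 2 / M ≤ (energy A B₀ : ℝ) →
          ∃ G₀ : Finset G, G₀ ⊆ B₀ ∧ G₀.Nonempty ∧
            (addDim G₀ : ℝ) ≤ C * M * Real.log A.card ∧
            (2 : ℝ)⁻¹ ^ 5 * (energy A B₀ : ℝ) ≤ (energy A G₀ : ℝ)) →
        ∃ B' B'' : Finset G, Disjoint B' B'' ∧ B' ∪ B'' = B ∧
          (addDim B' : ℝ) ≤ c₁ * M * Real.log A.card * Real.log ((B.card : ℝ) * M / K) ∧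
          c₂ * (energy A B : ℝ) ≤ (energy A B' : ℝ) ∧
          (energy A B'' : ℝ) ≤ (A.card : ℝ) * (B''.card : ℝ) ^ 2 / M := by
  intro C hC
  have hlg : 0 < Real.log (32 / 31) := Real.log_pos (by norm_num)
  have hl2 : 0 < Real.log 2 := Real.log_pos one_lt_two
  refine ⟨C * (2 / Real.log (32 / 31) + 1 / Real.log 2), (2 : ℝ)⁻¹ ^ 5, by positivity,
    by positivity, ?_⟩
  intro G _ _ A B M K hB2 hBA hK hKM hyp
  -- basic facts
  have hBne : B.Nonempty := Finset.card_pos.1 (by omega)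
  have hAne : A.Nonempty := Finset.card_pos.1 (by omega)
  have hA2 : 2 ≤ A.card := le_trans hB2 hBA
  have hEpos : (0 : ℝ) < (energy A B : ℝ) := by exact_mod_cast energy_pos hAne hBne
  have hBcR : (2 : ℝ) ≤ (B.card : ℝ) := by exact_mod_cast hB2
  have hAcR : (2 : ℝ) ≤ (A.card : ℝ) := by exact_mod_cast hA2
  have hKpos : 0 < K := by
    rw [hK]; positivity
  have hMpos : 0 < M := lt_of_lt_of_le hKpos hKM
  have hK1 : 1 ≤ K := by
    rw [hK, le_div_iff₀ hEpos, one_mul]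
    exact_mod_cast energy_le A B
  have hEeq : (energy A B : ℝ) = (A.card : ℝ) * (B.card : ℝ) ^ 2 / K := by
    rw [hK]
    field_simp
  have hEthr : (A.card : ℝ) * (B.card : ℝ) ^ 2 / M ≤ (energy A B : ℝ) := by
    rw [hEeq]
    exact div_le_div_of_nonneg_left (mul_nonneg (Nat.cast_nonneg _) (sq_nonneg _)) hKpos hKM
  set D := C * M * Real.log (A.card : ℝ) with hDdef
  have hlogA : Real.log 2 ≤ Real.log (A.card : ℝ) := Real.log_le_log (by norm_num) hAcR
  have hD : 0 ≤ D := by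
    have : 0 ≤ Real.log (A.card : ℝ) := le_trans (le_of_lt hl2) hlogA
    positivity
  obtain ⟨G₀, hG₀B, hG₀ne, hG₀dim, hG₀E⟩ := hyp B Finset.Subset.rfl hBne hEthr
  obtain ⟨B', B'', k₁, hdisj, hunion, hdim, hEsmall, hclause⟩ :=
    aux_induction A B M D hMpos hD hyp (B \ G₀).card (B \ G₀) le_rfl Finset.sdiff_subset
  have hGdisj : Disjoint G₀ (B \ G₀) := Finset.disjoint_sdiff
  have hGunion : G₀ ∪ (B \ G₀) = B := Finset.union_sdiff_of_subset hG₀B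
  have hEsum : (energy A G₀ : ℝ) + (energy A (B \ G₀) : ℝ) ≤ (energy A B : ℝ) := by
    have := energy_union_ge A hGdisj
    rw [hGunion] at this
    exact_mod_cast this
  -- the step-count bound
  have hstep : ((32 : ℝ) / 31) ^ k₁ * ((A.card : ℝ) / M) ≤ (energy A B : ℝ) := by
    rcases Nat.eq_zero_or_pos k₁ with hk₁ | hk₁
    · subst hk₁
      simp only [pow_zero, one_mul]
      have hb2 : (1 : ℝ) ≤ (B.card : ℝ) ^ 2 := by nlinarith
      have : (A.card : ℝ) / M ≤ (A.card : ℝ) * (B.card : ℝ) ^ 2 / M := by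
        gcongr
        nlinarith
      linarith
    · obtain ⟨hElow, hpow⟩ := hclause hk₁
      obtain ⟨m, rfl⟩ : ∃ m, k₁ = m + 1 := ⟨k₁ - 1, by omega⟩
      simp only [Nat.add_sub_cancel] at hpow
      have h32 : (energy A B : ℝ) / 32 ≤ (energy A G₀ : ℝ) := by
        norm_num at hG₀E
        linarith
      have hE1le : (energy A (B \ G₀) : ℝ) ≤ (31 / 32 : ℝ) * (energy A B : ℝ) := by
        linarith
      rw [pow_succ]
      have hAM : (0 : ℝ) ≤ (A.card : ℝ) / M := div_nonneg (Nat.cast_nonneg _) hMpos.le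
      calc ((32 : ℝ) / 31) ^ m * (32 / 31) * ((A.card : ℝ) / M)
          = (32 / 31) * (((32 : ℝ) / 31) ^ m * ((A.card : ℝ) / M)) := by ring
        _ ≤ (32 / 31) * (energy A (B \ G₀) : ℝ) := by gcongr
        _ ≤ (32 / 31) * ((31 / 32 : ℝ) * (energy A B : ℝ)) := by gcongr
        _ = (energy A B : ℝ) := by ring
  set L := Real.log ((B.card : ℝ) * M / K) with hLdef
  have hMK1 : 1 ≤ M / K := (one_le_div hKpos).2 hKM
  have h2le : (2 : ℝ) ≤ (B.card : ℝ) * M / K := by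
    rw [mul_div_assoc]
    have h := mul_le_mul hBcR hMK1 (by norm_num) (by linarith : (0:ℝ) ≤ (B.card : ℝ))
    linarith
  have hL : Real.log 2 ≤ L := Real.log_le_log (by norm_num) h2le
  have hLpos : 0 < L := lt_of_lt_of_le hl2 hL
  -- bound on k₁
  have hpowle : ((32 : ℝ) / 31) ^ k₁ ≤ ((B.card : ℝ) * M / K) ^ 2 := by
    have hApos : (0 : ℝ) < (A.card : ℝ) := by linarith
    have h1 : ((32 : ℝ) / 31) ^ k₁ ≤ (energy A B : ℝ) * M / (A.card : ℝ) := by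
      rw [le_div_iff₀ hApos]
      calc ((32 : ℝ) / 31) ^ k₁ * (A.card : ℝ)
          = ((32 : ℝ) / 31) ^ k₁ * ((A.card : ℝ) / M) * M := by
            rw [mul_assoc, div_mul_cancel₀ _ hMpos.ne']
        _ ≤ (energy A B : ℝ) * M := by gcongr
    have h2 : (energy A B : ℝ) * M / (A.card : ℝ) = (B.card : ℝ) ^ 2 * (M / K) := by
      rw [hEeq, div_eq_iff hApos.ne']
      ring
    rw [h2] at h1
    have ht2 : M / K ≤ (M / K) ^ 2 := by
      calc M / K = (M / K) ^ 1 := (pow_one _).symm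
        _ ≤ (M / K) ^ 2 := pow_le_pow_right₀ hMK1 one_le_two
    have h3 : (B.card : ℝ) ^ 2 * (M / K) ≤ ((B.card : ℝ) * M / K) ^ 2 := by
      calc (B.card : ℝ) ^ 2 * (M / K) ≤ (B.card : ℝ) ^ 2 * (M / K) ^ 2 :=
            mul_le_mul_of_nonneg_left ht2 (sq_nonneg _)
        _ = ((B.card : ℝ) * M / K) ^ 2 := by ring
    linarith
  have hk₁le : (k₁ : ℝ) * Real.log (32 / 31) ≤ 2 * L := by
    have hlhs := Real.log_le_log (by positivity) hpowle
    rw [Real.log_pow, Real.log_pow] at hlhs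
    simpa using hlhs
  have hk₁L : (k₁ : ℝ) ≤ 2 * L / Real.log (32 / 31) := by
    rw [le_div_iff₀ hlg]
    linarith
  -- assemble
  refine ⟨G₀ ∪ B', B'', ?_, ?_, ?_, ?_, hEsmall⟩
  · refine Finset.disjoint_union_left.2 ⟨?_, hdisj⟩
    have hB''sub : B'' ⊆ B \ G₀ := hunion ▸ Finset.subset_union_right
    exact Finset.disjoint_sdiff.mono_right hB''sub
  · rw [Finset.union_assoc, hunion, hGunion]
  · have h1 : (addDim (G₀ ∪ B') : ℝ) ≤ (addDim G₀ : ℝ) + (addDim B' : ℝ) := by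
      exact_mod_cast addDim_union_le G₀ B'
    have h2 : (addDim (G₀ ∪ B') : ℝ) ≤ ((k₁ : ℝ) + 1) * D := by
      push_cast at hdim ⊢
      linarith
    have hkk : ((k₁ : ℝ) + 1) ≤ 2 * L / Real.log (32 / 31) + L / Real.log 2 := by
      have : (1 : ℝ) ≤ L / Real.log 2 := (one_le_div hl2).2 hL
      linarith
    calc (addDim (G₀ ∪ B') : ℝ) ≤ ((k₁ : ℝ) + 1) * D := h2
      _ ≤ (2 * L / Real.log (32 / 31) + L / Real.log 2) * D := by
          apply mul_le_mul_of_nonneg_right hkk hD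
      _ = C * (2 / Real.log (32 / 31) + 1 / Real.log 2) * M * Real.log (A.card : ℝ) * L := by
          rw [hDdef]; field_simp
  · have := energy_mono A (Finset.subset_union_left (s₁ := G₀) (s₂ := B'))
    have h2 : (energy A G₀ : ℝ) ≤ (energy A (G₀ ∪ B') : ℝ) := by exact_mod_cast this
    linarith
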